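/- A finite-state control system is constrained I(Ω)-stabilizable from initial state s0 with all intermediate states in a constraint set Cα if and only if the set of constrained reachable states from s0 intersects I(Ω), where I(Ω) is the largest constrained control invariant subset of Ω (assuming s0 ∈ Cα and Ω ⊆ Cα). -/
import Mathlib


def ConstrainedControlInvariant {S U : Type*} (C : S → Set U) (f : S → U → S)
    (M : Set S) : Prop :=
  ∀ s ∈ M, ∃ u ∈ C s, f s u ∈ M

def largestInvariant {S U : Type*} (C : S → Set U) (f : S → U → S) (Ω : Set S) : Set S :=
  ⋃₀ {M : Set S | ConstrainedControlInvariant C f M ∧ M ⊆ Ω}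

/-- `α, u` is an admissible trajectory of the system from `α 0`. -/
def AdmissibleTraj {S U : Type*} (C : S → Set U) (f : S → U → S)
    (α : ℕ → S) (u : ℕ → U) : Prop :=
  ∀ k, u k ∈ C (α k) ∧ α (k + 1) = f (α k) (u k)

/-- The constrained reachable set `R(s0)`: states reached by some finite admissible input
sequence with all intermediate states in `Cα`. -/
def ConstrainedReachable {S U : Type*} (C : S → Set U) (f : S → U → S)
    (Cα : Set S) (s0 : S) : Set S :=
  {s | ∃ (K : ℕ) (α : ℕ → S) (u : ℕ → U), α 0 = s0 ∧ AdmissibleTraj C f α u ∧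
        (∀ k ≤ K, α k ∈ Cα) ∧ α K = s}

/-- Constrained `M`-stabilizability from `s0`. -/
def ConstrainedStabilizable {S U : Type*} (C : S → Set U) (f : S → U → S)
    (Cα : Set S) (M : Set S) (s0 : S) : Prop :=
  ∃ (α : ℕ → S) (u : ℕ → U) (K0 : ℕ), α 0 = s0 ∧ AdmissibleTraj C f α u ∧
    (∀ k < K0, α k ∈ Cα) ∧ (∀ k ≥ K0, α k ∈ M)

lemma largestInvariant_subset {S U : Type*} (C : S → Set U) (f : S → U → S) (Ω : Set S) :
    largestInvariant C f Ω ⊆ Ω := by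
  intro s hs
  obtain ⟨M, ⟨_, hMΩ⟩, hsM⟩ := hs
  exact hMΩ hsM

lemma largestInvariant_invariant {S U : Type*} (C : S → Set U) (f : S → U → S) (Ω : Set S) :
    ConstrainedControlInvariant C f (largestInvariant C f Ω) := by
  intro s hs
  obtain ⟨M, hM, hsM⟩ := hs
  obtain ⟨u, hu, hfu⟩ := hM.1 s hsM
  exact ⟨u, hu, M, hM, hfu⟩

theorem constrainedStabilizable_iff_reach_largestInvariant
    {S U : Type*} [Fintype S] (C : S → Set U) (f : S → U → S)
    (Cα Ω : Set S) (s0 : S) (hs0 : s0 ∈ Cα) (hΩ : Ω ⊆ Cα) :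
    ConstrainedStabilizable C f Cα (largestInvariant C f Ω) s0 ↔
      (ConstrainedReachable C f Cα s0 ∩ largestInvariant C f Ω).Nonempty := by
  set I := largestInvariant C f Ω with hI
  have hIΩ : I ⊆ Ω := largestInvariant_subset C f Ω
  have hICα : I ⊆ Cα := fun s hs => hΩ (hIΩ hs)
  constructor
  · rintro ⟨α, u, K0, h0, hadm, hcon, hM⟩
    refine ⟨α K0, ⟨K0, α, u, h0, hadm, ?_, rfl⟩, hM K0 le_rfl⟩
    intro k hk
    rcases lt_or_eq_of_le hk with h | h
    · exact hcon k h
    · subst h; exact hICα (hM k le_rfl)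
  · rintro ⟨s, ⟨K, α, u, h0, hadm, hcon, hK⟩, hsI⟩
    choose g hg1 hg2 using fun x : {x : S // x ∈ I} =>
      largestInvariant_invariant C f Ω x.1 x.2
    -- build infinite tail inside I
    let β : ℕ → {x : S // x ∈ I} := fun n =>
      Nat.rec ⟨s, hsI⟩ (fun _ p => ⟨f p.1 (g p), hg2 p⟩) n
    have hβ0 : (β 0).1 = s := rfl
    have hβstep : ∀ n, (β (n + 1)).1 = f (β n).1 (g (β n)) := fun n => rfl
    let α' : ℕ → S := fun k => if k < K then α k else (β (k - K)).1
    let u' : ℕ → U := fun k => if k < K then u k else g (β (k - K))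
    have hα'lt : ∀ k, k < K → α' k = α k := by
      intro k hk; simp [α', hk]
    have hα'ge : ∀ k, K ≤ k → α' k = (β (k - K)).1 := by
      intro k hk; simp [α', Nat.not_lt.2 hk]
    have hα'K : α' K = s := by rw [hα'ge K le_rfl]; simp [hβ0]
    refine ⟨α', u', K, ?_, ?_, ?_, ?_⟩
    · rcases Nat.eq_zero_or_pos K with h | h
      · subst h; rw [hα'K, ← hK]; exact h0
      · rw [hα'lt 0 h, h0]
    · intro k
      rcases lt_or_ge k K with hk | hk
      · constructor
        · simp only [u', if_pos hk, hα'lt k hk]; exact (hadm k).1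
        · rcases lt_or_eq_of_le (Nat.succ_le_of_lt hk) with h | h
          · rw [hα'lt (k+1) h, hα'lt k hk]; simp only [u', if_pos hk]
            exact (hadm k).2
          · rw [← h] at hα'K
            rw [hα'K, ← hK, ← h, hα'lt k hk]
            simp only [u', if_pos hk]
            exact (hadm k).2
      · have hk1 : K ≤ k + 1 := le_trans hk (Nat.le_succ k)
        have e1 : k + 1 - K = (k - K) + 1 := by omega
        constructor
        · simp only [u', if_neg (Nat.not_lt.2 hk), hα'ge k hk]
          exact hg1 (β (k - K))
        · rw [hα'ge (k+1) hk1, hα'ge k hk, e1, hβstep]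
          simp only [u', if_neg (Nat.not_lt.2 hk)]
    · intro k hk; rw [hα'lt k hk]; exact hcon k (le_of_lt hk)
    · intro k hk; rw [hα'ge k hk]; exact (β (k - K)).2
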